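/- If positive rationals a > b satisfy a^k = b^k + a - b for a positive integer k ≥ 2, then setting a1 = 1/a and r = b/a, one has 0 < r < 1, 0 < r^k < 1, and a1/(1 - r) = a1^k/(1 - r^k). -/

import Mathlib

theorem stmt_18 (a b : ℚ) (k : ℕ) (hk : 2 ≤ k)
    (hb : 0 < b) (hba : b < a) (h : a^k = b^k + a - b) :
    0 < b/a ∧ b/a < 1 ∧ 0 < (b/a)^k ∧ (b/a)^k < 1 ∧
    (1/a) / (1 - b/a) = (1/a)^k / (1 - (b/a)^k) := by
  have ha : 0 < a := hb.trans hba
  have hr : 0 < b / a := div_pos hb ha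
  have hr1 : b / a < 1 := (div_lt_one ha).mpr hba
  refine ⟨hr, hr1, pow_pos hr k, pow_lt_one₀ hr.le hr1 (by omega), ?_⟩
  have hbk : b ^ k < a ^ k := pow_lt_pow_left₀ hba hb.le (by omega)
  have key : a ^ k - b ^ k = a - b := by linarith
  have h1 : (1:ℚ)/a / (1 - b/a) = 1/(a-b) := by
    have : 0 < 1 - b/a := by linarith
    rw [div_eq_div_iff (by linarith) (by linarith)]
    field_simp
  have h2 : ((1:ℚ)/a)^k / (1 - (b/a)^k) = 1/(a^k-b^k) := by
    have hk1 : (b/a)^k < 1 := pow_lt_one₀ hr.le hr1 (by omega)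
    rw [div_eq_div_iff (by linarith) (by linarith)]
    field_simp [div_pow]
    rw [div_pow, div_pow, one_pow, one_div_mul_eq_div, sub_div, div_self (pow_ne_zero k ha.ne')]
  rw [h1, h2, key]
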